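/- Fix d ≥ 1 and permutations p_x, p_y of Fin d such that the subgroup generated by p_x and p_y acts transitively on Fin d, let p_z := p_x⁻¹ ∘ p_y⁻¹, let (m_A, m_B) be the M-Origami pair associated to (p_x, p_y), and let K := m_A ∘ m_B ∘ m_A⁻¹ ∘ m_B⁻¹. Define the rational numbers g_Y := (2 + d − c(p_x) − c(p_y) − c(p_z))/2 and g_X := (2 + 4d − c(K))/2. Then g_Y + d/4 ≤ g_X ≤ g_Y + d. -/

import Mathlib

/-- `m_A` of the M-Origami pair associated to `(p_x, p_y)`
(squares labelled `0,1,2,3` instead of `1,2,3,4`):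
`m_A (0,j) = (1,j)`, `m_A (1,j) = (0, p_y j)`, `m_A (2,j) = (3,j)`, `m_A (3,j) = (2, p_y⁻¹ j)`. -/
def mOrigamiA {d : ℕ} (py : Equiv.Perm (Fin d)) : Equiv.Perm (Fin 4 × Fin d) :=
  Equiv.prodShear (Equiv.swap 0 1 * Equiv.swap 2 3 : Equiv.Perm (Fin 4))
    (fun i => if i = 1 then py else if i = 3 then py⁻¹ else Equiv.refl (Fin d))

/-- `m_B` of the M-Origami pair associated to `(p_x, p_y)`:
`m_B (0,j) = (2,j)`, `m_B (1,j) = (3,j)`, `m_B (2,j) = (0, p_x⁻¹ j)`, `m_B (3,j) = (1, p_x j)`. -/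
def mOrigamiB {d : ℕ} (px : Equiv.Perm (Fin d)) : Equiv.Perm (Fin 4 × Fin d) :=
  Equiv.prodShear (Equiv.swap 0 2 * Equiv.swap 1 3 : Equiv.Perm (Fin 4))
    (fun i => if i = 2 then px⁻¹ else if i = 3 then px else Equiv.refl (Fin d))

/-- `c(σ)`: the number of orbits of the cyclic group generated by `σ`
(i.e., the number of cycles of `σ`, counting fixed points as cycles of length 1). -/
noncomputable def cyc {S : Type*} (σ : Equiv.Perm S) : ℕ :=
  Nat.card (MulAction.orbitRel.Quotient (Subgroup.zpowers σ) S)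


open MulAction Subgroup

section Aux

variable {α β S : Type*}


/-- Fiberwise permutations as a monoid hom. -/
def shearHom (α β : Type*) : (α → Equiv.Perm β) →* Equiv.Perm (α × β) where
  toFun f := Equiv.prodShear (Equiv.refl α) f
  map_one' := by ext ⟨a, b⟩ <;> rfl
  map_mul' f g := by ext ⟨a, b⟩ <;> rfl

lemma shearHom_zpow_apply (f : α → Equiv.Perm β) (z : ℤ) (p : α × β) :
    ((shearHom α β f) ^ z) p = (p.1, (f p.1 ^ z) p.2) := by
  rw [← map_zpow]
  rfl

lemma shear_orbitRel (f : α → Equiv.Perm β) (p q : α × β) :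
    orbitRel (zpowers (shearHom α β f)) (α × β) p q ↔
      p.1 = q.1 ∧ orbitRel (zpowers (f q.1)) β p.2 q.2 := by
  constructor
  · intro h
    rw [orbitRel_apply, mem_orbit_iff] at h
    obtain ⟨⟨g, hg⟩, h⟩ := h
    obtain ⟨z, rfl⟩ := mem_zpowers_iff.mp hg
    have h' : ((shearHom α β f) ^ z) q = p := h
    rw [shearHom_zpow_apply] at h'
    refine ⟨by rw [← h'], ?_⟩
    rw [orbitRel_apply, mem_orbit_iff]
    exact ⟨⟨f q.1 ^ z, zpow_mem (mem_zpowers _) z⟩, by rw [← h']; rfl⟩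
  · rintro ⟨h1, h2⟩
    rw [orbitRel_apply, mem_orbit_iff] at h2 ⊢
    obtain ⟨⟨g, hg⟩, h2⟩ := h2
    obtain ⟨z, rfl⟩ := mem_zpowers_iff.mp hg
    have h2' : (f q.1 ^ z) q.2 = p.2 := h2
    refine ⟨⟨(shearHom α β f) ^ z, zpow_mem (mem_zpowers _) z⟩, ?_⟩
    show ((shearHom α β f) ^ z) q = p
    rw [shearHom_zpow_apply, h2']
    exact Prod.ext h1.symm rfl

noncomputable def shearQuotEquiv (f : α → Equiv.Perm β) :
    orbitRel.Quotient (zpowers (shearHom α β f)) (α × β) ≃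
      Σ a : α, orbitRel.Quotient (zpowers (f a)) β where
  toFun x := Quotient.liftOn' x (fun p => ⟨p.1, Quotient.mk'' p.2⟩)
    (by
      rintro ⟨a, b⟩ ⟨a', b'⟩ h
      obtain ⟨h1, h2⟩ := (shear_orbitRel f _ _).mp h
      dsimp at h1 h2 ⊢
      subst h1
      exact Sigma.ext rfl (heq_of_eq (Quotient.sound' h2)))
  invFun x := Quotient.liftOn' x.2 (fun b => Quotient.mk'' (x.1, b))
    (fun b b' h => Quotient.sound' ((shear_orbitRel f _ _).mpr ⟨rfl, h⟩))
  left_inv := by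
    intro x
    induction x using Quotient.inductionOn' with
    | h p => rfl
  right_inv := by
    rintro ⟨a, q⟩
    induction q using Quotient.inductionOn' with
    | h b => rfl

lemma cyc_shearHom [Fintype α] [Fintype β] (f : α → Equiv.Perm β) :
    cyc (shearHom α β f) = ∑ a, cyc (f a) := by
  classical
  rw [cyc, Nat.card_congr (shearQuotEquiv f), Nat.card_eq_fintype_card,
    Fintype.card_sigma]
  exact Finset.sum_congr rfl fun a _ => (Nat.card_eq_fintype_card).symm

lemma cyc_one [Fintype β] : cyc (1 : Equiv.Perm β) = Fintype.card β := by
  have e : orbitRel.Quotient (zpowers (1 : Equiv.Perm β)) β ≃ β := by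
    refine ⟨fun x => Quotient.liftOn' x id ?_, Quotient.mk'', ?_, ?_⟩
    · intro a b h
      rw [orbitRel_apply, mem_orbit_iff] at h
      obtain ⟨⟨g, hg⟩, h⟩ := h
      obtain ⟨z, rfl⟩ := mem_zpowers_iff.mp hg
      have h' : ((1 : Equiv.Perm β) ^ z) b = a := h
      simpa using h'.symm
    · intro x
      induction x using Quotient.inductionOn' with
      | h b => rfl
    · intro b
      rfl
  rw [cyc, Nat.card_congr e, Nat.card_eq_fintype_card]

lemma cyc_congr {σ τ : Equiv.Perm S} (h : zpowers σ = zpowers τ) : cyc σ = cyc τ := by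
  unfold cyc
  rw [h]

def toCoarse (σ : Equiv.Perm S) :
    orbitRel.Quotient (zpowers (σ ^ 2)) S → orbitRel.Quotient (zpowers σ) S :=
  Quotient.map' id (fun a b h => by
    rw [orbitRel_apply, mem_orbit_iff] at h ⊢
    obtain ⟨⟨g, hg⟩, h⟩ := h
    obtain ⟨z, rfl⟩ := mem_zpowers_iff.mp hg
    exact ⟨⟨(σ ^ 2) ^ z, zpow_mem (zpow_mem (mem_zpowers _) 2) z⟩, h⟩)

lemma toCoarse_mk (σ : Equiv.Perm S) (x : S) :
    toCoarse σ (Quotient.mk'' x) = Quotient.mk'' x := rfl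

lemma cyc_le_cyc_sq [Finite S] (σ : Equiv.Perm S) : cyc σ ≤ cyc (σ ^ 2) := by
  apply Nat.card_le_card_of_surjective (toCoarse σ)
  intro x
  induction x using Quotient.inductionOn' with
  | h a => exact ⟨Quotient.mk'' a, rfl⟩

end Aux

section Aux2
variable {S : Type*}

lemma fiber_subset_pair [Fintype S] (σ : Equiv.Perm S)
    (r : orbitRel.Quotient (zpowers σ) S) :
    ∀ c : orbitRel.Quotient (zpowers (σ ^ 2)) S, toCoarse σ c = r →
      c = Quotient.mk'' r.out ∨ c = Quotient.mk'' (σ r.out) := by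
  intro c hc
  induction c using Quotient.inductionOn' with
  | h y =>
    rw [toCoarse_mk] at hc
    rw [← Quotient.out_eq' r, Quotient.eq''] at hc
    rw [orbitRel_apply, mem_orbit_iff] at hc
    obtain ⟨⟨g, hg⟩, hgy⟩ := hc
    obtain ⟨z, rfl⟩ := mem_zpowers_iff.mp hg
    have hgy' : (σ ^ z) r.out = y := hgy
    have key : (Quotient.mk'' y : orbitRel.Quotient (zpowers (σ ^ 2)) S)
        = Quotient.mk'' ((σ ^ (z % 2)) r.out) := by
      apply Quotient.sound'
      rw [orbitRel_apply, mem_orbit_iff]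
      refine ⟨⟨(σ ^ 2) ^ (z / 2), zpow_mem (mem_zpowers _) _⟩, ?_⟩
      show ((σ ^ 2) ^ (z / 2)) ((σ ^ (z % 2)) r.out) = y
      have h2 : ((σ : Equiv.Perm S) ^ 2) = σ ^ (2 : ℤ) := (zpow_ofNat σ 2).symm
      rw [h2, ← zpow_mul, ← Equiv.Perm.mul_apply, ← zpow_add]
      rw [Int.mul_ediv_add_emod z 2]
      exact hgy'
    rcases Int.emod_two_eq_zero_or_one z with h | h <;> rw [h] at key
    · left; simpa using key
    · right; simpa using key

end Aux2

section Aux3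
variable {S : Type*}

lemma two_cyc_sq_le [Fintype S] (σ : Equiv.Perm S) :
    2 * cyc (σ ^ 2) ≤ 2 * cyc σ + Fintype.card S := by
  classical
  letI : Fintype (orbitRel.Quotient (zpowers (σ ^ 2)) S) := Quotient.fintype _
  letI : Fintype (orbitRel.Quotient (zpowers σ) S) := Quotient.fintype _
  rw [cyc, cyc, Nat.card_eq_fintype_card, Nat.card_eq_fintype_card]
  have hQHcard : Fintype.card (orbitRel.Quotient (zpowers (σ ^ 2)) S)
      = ∑ r : orbitRel.Quotient (zpowers σ) S,
          (Finset.univ.filter fun c => toCoarse σ c = r).card :=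
    Finset.card_eq_sum_card_fiberwise (fun x _ => Finset.mem_univ _)
  have hScard : Fintype.card S
      = ∑ r : orbitRel.Quotient (zpowers σ) S,
          (Finset.univ.filter fun x : S =>
            (Quotient.mk'' x : orbitRel.Quotient (zpowers σ) S) = r).card :=
    Finset.card_eq_sum_card_fiberwise (fun x _ => Finset.mem_univ _)
  have hpt : ∀ r : orbitRel.Quotient (zpowers σ) S,
      2 * (Finset.univ.filter fun c => toCoarse σ c = r).card
        ≤ 2 + (Finset.univ.filter fun x : S =>
            (Quotient.mk'' x : orbitRel.Quotient (zpowers σ) S) = r).card := by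
    intro r
    have h2 : (Finset.univ.filter fun c => toCoarse σ c = r).card ≤ 2 := by
      refine le_trans (Finset.card_le_card (t := {Quotient.mk'' r.out, Quotient.mk'' (σ r.out)}) ?_) ?_
      · intro c hc
        simp only [Finset.mem_filter, Finset.mem_univ, true_and] at hc
        simp only [Finset.mem_insert, Finset.mem_singleton]
        exact fiber_subset_pair σ r c hc
      · exact le_trans (Finset.card_insert_le _ _) (by simp)
    have hm : (Finset.univ.filter fun c => toCoarse σ c = r).card
        ≤ (Finset.univ.filter fun x : S =>
            (Quotient.mk'' x : orbitRel.Quotient (zpowers σ) S) = r).card := by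
      apply Finset.card_le_card_of_injOn (fun c => c.out)
      · intro c hc
        simp only [Finset.mem_coe, Finset.mem_filter, Finset.mem_univ, true_and] at hc ⊢
        calc (Quotient.mk'' c.out : orbitRel.Quotient (zpowers σ) S)
            = toCoarse σ (Quotient.mk'' c.out) := (toCoarse_mk _ _).symm
          _ = toCoarse σ c := by rw [Quotient.out_eq']
          _ = r := hc
      · intro a _ b _ h
        exact Quotient.out_injective h
    omega
  calc 2 * Fintype.card (orbitRel.Quotient (zpowers (σ ^ 2)) S)
      = ∑ r : orbitRel.Quotient (zpowers σ) S,
          2 * (Finset.univ.filter fun c => toCoarse σ c = r).card := by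
        rw [hQHcard, Finset.mul_sum]
    _ ≤ ∑ r : orbitRel.Quotient (zpowers σ) S,
          (2 + (Finset.univ.filter fun x : S =>
            (Quotient.mk'' x : orbitRel.Quotient (zpowers σ) S) = r).card) :=
        Finset.sum_le_sum (fun r _ => hpt r)
    _ = 2 * Fintype.card (orbitRel.Quotient (zpowers σ) S) + Fintype.card S := by
        rw [Finset.sum_add_distrib, Finset.sum_const, ← hScard, Finset.card_univ, smul_eq_mul,
          mul_comm]

end Aux3

def mOrigamiF {d : ℕ} (px py : Equiv.Perm (Fin d)) : Fin 4 → Equiv.Perm (Fin d) := fun i =>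
  if i = 0 then (py * px) ^ 2 else if i = 1 then px⁻¹ ^ 2 else if i = 2 then py⁻¹ ^ 2 else 1

lemma mOrigami_shear_mul {d : ℕ} (px py : Equiv.Perm (Fin d)) :
    shearHom (Fin 4) (Fin d) (mOrigamiF px py) * (mOrigamiB px * mOrigamiA py)
      = mOrigamiA py * mOrigamiB px := by
  apply Equiv.ext
  rintro ⟨i, j⟩
  fin_cases i <;>
    simp [mOrigamiF, shearHom, mOrigamiA, mOrigamiB, Equiv.prodShear, Equiv.Perm.mul_apply,
      Equiv.swap_apply_def, pow_two]

lemma mOrigami_comm_eq {d : ℕ} (px py : Equiv.Perm (Fin d)) :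
    mOrigamiA py * mOrigamiB px * (mOrigamiA py)⁻¹ * (mOrigamiB px)⁻¹
      = shearHom (Fin 4) (Fin d) (mOrigamiF px py) := by
  have h1 : mOrigamiA py * mOrigamiB px * (mOrigamiA py)⁻¹ * (mOrigamiB px)⁻¹
      = (mOrigamiA py * mOrigamiB px) * (mOrigamiB px * mOrigamiA py)⁻¹ := by
    rw [mul_inv_rev, mul_assoc]
  rw [h1, ← mOrigami_shear_mul px py]
  exact mul_inv_cancel_right _ _

/-- Genus bounds for M-Origamis: `g_Y + d/4 ≤ g_X ≤ g_Y + d`. -/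
theorem mOrigami_genus_bounds {d : ℕ} (hd : 1 ≤ d) (px py : Equiv.Perm (Fin d))
    (htrans : ∀ i j : Fin d,
      ∃ g ∈ Subgroup.closure ({px, py} : Set (Equiv.Perm (Fin d))), g i = j)
    (pz : Equiv.Perm (Fin d)) (hpz : pz = px⁻¹ * py⁻¹)
    (K : Equiv.Perm (Fin 4 × Fin d))
    (hK : K = mOrigamiA py * mOrigamiB px * (mOrigamiA py)⁻¹ * (mOrigamiB px)⁻¹)
    (gY gX : ℚ)
    (hgY : gY = (2 + (d : ℚ) - cyc px - cyc py - cyc pz) / 2)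
    (hgX : gX = (2 + 4 * (d : ℚ) - cyc K) / 2) :
    gY + (d : ℚ) / 4 ≤ gX ∧ gX ≤ gY + d := by
  have hcycK : cyc K = cyc ((py * px) ^ 2) + cyc (px⁻¹ ^ 2) + cyc (py⁻¹ ^ 2) + d := by
    rw [hK, mOrigami_comm_eq, cyc_shearHom, Fin.sum_univ_four]
    have e0 : mOrigamiF px py 0 = (py * px) ^ 2 := rfl
    have e1 : mOrigamiF px py 1 = px⁻¹ ^ 2 := rfl
    have e2 : mOrigamiF px py 2 = py⁻¹ ^ 2 := rfl
    have e3 : mOrigamiF px py 3 = 1 := rfl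
    rw [e0, e1, e2, e3, cyc_one, Fintype.card_fin]
  have hx : cyc (px⁻¹ ^ 2) = cyc (px ^ 2) :=
    cyc_congr (by rw [inv_pow, Subgroup.zpowers_inv])
  have hy : cyc (py⁻¹ ^ 2) = cyc (py ^ 2) :=
    cyc_congr (by rw [inv_pow, Subgroup.zpowers_inv])
  have hz : cyc ((py * px) ^ 2) = cyc (pz ^ 2) := by
    apply cyc_congr
    rw [hpz, show px⁻¹ * py⁻¹ = (py * px)⁻¹ by rw [mul_inv_rev], inv_pow,
      Subgroup.zpowers_inv]
  have l1 : cyc px ≤ cyc (px ^ 2) := cyc_le_cyc_sq px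
  have l2 : cyc py ≤ cyc (py ^ 2) := cyc_le_cyc_sq py
  have l3 : cyc pz ≤ cyc (pz ^ 2) := cyc_le_cyc_sq pz
  have u1 : 2 * cyc (px ^ 2) ≤ 2 * cyc px + d := by
    have := two_cyc_sq_le px; rwa [Fintype.card_fin] at this
  have u2 : 2 * cyc (py ^ 2) ≤ 2 * cyc py + d := by
    have := two_cyc_sq_le py; rwa [Fintype.card_fin] at this
  have u3 : 2 * cyc (pz ^ 2) ≤ 2 * cyc pz + d := by
    have := two_cyc_sq_le pz; rwa [Fintype.card_fin] at this
  rw [hx, hy, hz] at hcycK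
  have hcK : (cyc K : ℚ) = cyc (pz ^ 2) + cyc (px ^ 2) + cyc (py ^ 2) + d := by
    exact_mod_cast congrArg (Nat.cast : ℕ → ℚ) hcycK
  have q1 : (cyc px : ℚ) ≤ cyc (px ^ 2) := by exact_mod_cast l1
  have q2 : (cyc py : ℚ) ≤ cyc (py ^ 2) := by exact_mod_cast l2
  have q3 : (cyc pz : ℚ) ≤ cyc (pz ^ 2) := by exact_mod_cast l3
  have r1 : 2 * (cyc (px ^ 2) : ℚ) ≤ 2 * cyc px + d := by exact_mod_cast u1
  have r2 : 2 * (cyc (py ^ 2) : ℚ) ≤ 2 * cyc py + d := by exact_mod_cast u2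
  have r3 : 2 * (cyc (pz ^ 2) : ℚ) ≤ 2 * cyc pz + d := by exact_mod_cast u3
  subst hgY hgX
  constructor <;> linarith
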